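/- Let a, b be distinct letters and d = gcd(m+2, n+2) for m, n > 0 with d > 1. Then there exist words u, v over {a,b} with |u| = m, |v| = n, and u·a·b·v = v·a·b·u; consequently (m, n) is in the length abstraction of xaby = yabx. -/

import Mathlib

private lemma rep_join_append {A : Type*} (B : List A) (i j : ℕ) :
    (List.replicate i B).flatten ++ (List.replicate j B).flatten
      = (List.replicate (i + j) B).flatten := by
  induction i with
  | zero => simp
  | succ k ih => simp [List.replicate_succ, List.append_assoc, ih, Nat.succ_add]

theorem stmt_19 {A : Type*} (a b : A) (hab : a ≠ b) (m n : ℕ)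
    (hm : 0 < m) (hn : 0 < n) (hd : 1 < Nat.gcd (m + 2) (n + 2)) :
    ∃ u v : List A,
      (∀ c ∈ u, c = a ∨ c = b) ∧ (∀ c ∈ v, c = a ∨ c = b) ∧
      u.length = m ∧ v.length = n ∧
      u ++ [a, b] ++ v = v ++ [a, b] ++ u := by
  set d := Nat.gcd (m + 2) (n + 2) with hdef
  have hdm : d ∣ m + 2 := Nat.gcd_dvd_left _ _
  have hdn : d ∣ n + 2 := Nat.gcd_dvd_right _ _
  obtain ⟨p, hp⟩ := hdm
  obtain ⟨q, hq⟩ := hdn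
  have hp1 : 1 ≤ p := by nlinarith
  have hq1 : 1 ≤ q := by nlinarith
  set B : List A := List.replicate (d - 1) a ++ [b] with hB
  have hBlen : B.length = d := by simp [hB]; omega
  have hkey : List.replicate (d - 2) a ++ [a, b] = B := by
    have h1 : d - 1 = (d - 2) + 1 := by omega
    rw [hB, h1, List.replicate_succ']
    simp
  refine ⟨(List.replicate (p - 1) B).flatten ++ List.replicate (d - 2) a,
          (List.replicate (q - 1) B).flatten ++ List.replicate (d - 2) a, ?_, ?_, ?_, ?_, ?_⟩
  · intro c hc
    simp only [List.mem_append, List.mem_flatten, List.mem_replicate, hB] at hc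
    rcases hc with ⟨l, ⟨_, rfl⟩, hcl⟩ | ⟨_, rfl⟩
    · simp only [List.mem_append, List.mem_replicate, List.mem_singleton] at hcl
      tauto
    · left; rfl
  · intro c hc
    simp only [List.mem_append, List.mem_flatten, List.mem_replicate, hB] at hc
    rcases hc with ⟨l, ⟨_, rfl⟩, hcl⟩ | ⟨_, rfl⟩
    · simp only [List.mem_append, List.mem_replicate, List.mem_singleton] at hcl
      tauto
    · left; rfl
  · simp [List.length_flatten, hBlen, List.map_replicate]
    have hpd : p * d = m + 2 := by rw [Nat.mul_comm]; exact hp.symm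
    have hd2 : 2 ≤ d := hd
    have hdle : d ≤ m + 2 := Nat.le_of_dvd (by omega) ⟨p, hp⟩
    rw [Nat.sub_mul, one_mul, hpd]
    omega
  · simp [List.length_flatten, hBlen, List.map_replicate]
    have hqd : q * d = n + 2 := by rw [Nat.mul_comm]; exact hq.symm
    have hd2 : 2 ≤ d := hd
    have hdle : d ≤ n + 2 := Nat.le_of_dvd (by omega) ⟨q, hq⟩
    rw [Nat.sub_mul, one_mul, hqd]
    omega
  · have expand : ∀ i j : ℕ,
        ((List.replicate i B).flatten ++ List.replicate (d - 2) a) ++ [a, b]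
          ++ ((List.replicate j B).flatten ++ List.replicate (d - 2) a)
        = (List.replicate (i + 1 + j) B).flatten ++ List.replicate (d - 2) a := by
      intro i j
      calc ((List.replicate i B).flatten ++ List.replicate (d - 2) a) ++ [a, b]
              ++ ((List.replicate j B).flatten ++ List.replicate (d - 2) a)
          = (List.replicate i B).flatten ++ (List.replicate (d - 2) a ++ [a, b])
              ++ ((List.replicate j B).flatten ++ List.replicate (d - 2) a) := by
            simp [List.append_assoc]
        _ = ((List.replicate i B).flatten ++ (List.replicate 1 B).flatten)
              ++ ((List.replicate j B).flatten ++ List.replicate (d - 2) a) := by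
            rw [hkey]; simp [List.append_assoc]
        _ = (List.replicate (i + 1) B).flatten
              ++ ((List.replicate j B).flatten ++ List.replicate (d - 2) a) := by
            rw [rep_join_append]
        _ = ((List.replicate (i + 1) B).flatten ++ (List.replicate j B).flatten)
              ++ List.replicate (d - 2) a := by simp [List.append_assoc]
        _ = (List.replicate (i + 1 + j) B).flatten ++ List.replicate (d - 2) a := by
            rw [rep_join_append]
    rw [expand, expand]
    have : p - 1 + 1 + (q - 1) = q - 1 + 1 + (p - 1) := by omega
    rw [this]
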